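/- Let n ≥ 3 with n not a power of 2, and let A be an n×n circulant matrix over a finite field F of characteristic 2. Suppose A is semi-involutory with associated non-singular diagonal matrices D₁ and D₂, i.e., A⁻¹ = D₁·A·D₂. If A is MDS, then trace(D₁) = 0 and trace(D₂) = 0. -/

import Mathlib

open Matrix

/-- The `n × n` circulant matrix with first row `c₀, c₁, …, c_{n-1}`, i.e. the matrix whose
`(i,j)` entry is `c_{(j - i) mod n}`. -/
def circulantM {n : ℕ} {F : Type*} (c : Fin n → F) : Matrix (Fin n) (Fin n) F :=
  Matrix.of fun i j => c (j - i)

/-- A square matrix over a field is MDS if every square submatrix (including the matrix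
itself) is non-singular. -/
def IsMDS {n : ℕ} {F : Type*} [Field F] (A : Matrix (Fin n) (Fin n) F) : Prop :=
  ∀ (s : ℕ) (r c : Fin s → Fin n), Function.Injective r → Function.Injective c →
    (A.submatrix r c).det ≠ 0

private lemma inj2 {α : Type*} {a b : α} (h : a ≠ b) : Function.Injective ![a, b] := by
  intro x y hxy
  fin_cases x <;> fin_cases y <;> simp_all

/-- Elements of order dividing 2 in `Fin n`. -/
private lemma fin_add_self_eq_zero {n : ℕ} [NeZero n] (x : Fin n) :
    x + x = 0 ↔ x = 0 ∨ 2 * x.val = n := by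
  have hx : x.val < n := x.isLt
  constructor
  · intro h
    have h' : (x.val + x.val) % n = 0 := by
      have := congrArg Fin.val h
      rwa [Fin.add_def] at this
    rcases Nat.lt_or_ge (x.val + x.val) n with h1 | h1
    · rw [Nat.mod_eq_of_lt h1] at h'
      left
      have hx0 : x.val = 0 := by omega
      exact Fin.ext (by rw [hx0, Fin.val_zero])
    · rw [Nat.mod_eq_sub_mod h1, Nat.mod_eq_of_lt (by omega)] at h'
      right; omega
  · intro h
    apply Fin.ext
    rw [Fin.add_def]
    rcases h with h | h
    · have h0 : x.val = 0 := congrArg Fin.val h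
      simp [h0]
    · have h0 : x.val + x.val = n := by omega
      simp [h0, Nat.mod_self]

open Fin.CommRing Fin.NatCast in
theorem trace_eq_zero_of_circulant_semiInvolutory_mds {F : Type*} [Field F] [Fintype F]
    [CharP F 2] {n : ℕ} (hn : 3 ≤ n) (hnot : ∀ d : ℕ, n ≠ 2 ^ d)
    (c : Fin n → F) (A : Matrix (Fin n) (Fin n) F)
    (hA : A = circulantM c) (hAdet : A.det ≠ 0)
    (D₁ D₂ : Matrix (Fin n) (Fin n) F)
    (hD₁diag : D₁.IsDiag) (hD₂diag : D₂.IsDiag)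
    (hD₁det : D₁.det ≠ 0) (hD₂det : D₂.det ≠ 0)
    (hsi : A⁻¹ = D₁ * A * D₂)
    (hmds : IsMDS A) :
    D₁.trace = 0 ∧ D₂.trace = 0 := by
  haveI : NeZero n := ⟨by omega⟩
  set d₁ : Fin n → F := D₁.diag with hd₁def
  set d₂ : Fin n → F := D₂.diag with hd₂def
  have hD₁ : D₁ = Matrix.diagonal d₁ := (hD₁diag.diagonal_diag).symm
  have hD₂ : D₂ = Matrix.diagonal d₂ := (hD₂diag.diagonal_diag).symm
  have hd₁ : ∀ i, d₁ i ≠ 0 := by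
    intro i h
    apply hD₁det
    rw [hD₁, Matrix.det_diagonal]
    exact Finset.prod_eq_zero (Finset.mem_univ i) h
  have hd₂ : ∀ i, d₂ i ≠ 0 := by
    intro i h
    apply hD₂det
    rw [hD₂, Matrix.det_diagonal]
    exact Finset.prod_eq_zero (Finset.mem_univ i) h
  have hent : ∀ i j : Fin n, A i j = c (j - i) := fun i j => by rw [hA]; rfl
  -- every entry of the circulant is nonzero, by MDS applied to 1×1 submatrices
  have hc : ∀ k : Fin n, c k ≠ 0 := by
    intro k hk
    apply hmds 1 (fun _ => (0 : Fin n)) (fun _ => k)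
      (Function.injective_of_subsingleton _) (Function.injective_of_subsingleton _)
    rw [Matrix.det_fin_one, Matrix.submatrix_apply, hent, sub_zero, hk]
  set B : Matrix (Fin n) (Fin n) F := D₁ * A * D₂ with hBdef
  have hAdet' : IsUnit A.det := isUnit_iff_ne_zero.mpr hAdet
  have hAB : A * B = 1 := by rw [← hsi]; exact Matrix.mul_nonsing_inv A hAdet'
  have hBA : B * A = 1 := by rw [← hsi]; exact Matrix.nonsing_inv_mul A hAdet'
  have hBent : ∀ i j, B i j = d₁ i * A i j * d₂ j := by
    intro i j
    rw [hBdef, hD₁, hD₂, Matrix.mul_diagonal, Matrix.diagonal_mul]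
  -- the cyclic-shift equivariance of A passes to B
  set σ : Equiv.Perm (Fin n) := Equiv.addRight 1 with hσdef
  have hσ : ∀ i : Fin n, σ i = i + 1 := fun i => rfl
  have hAσ : A.submatrix σ σ = A := by
    ext i j
    rw [Matrix.submatrix_apply, hσ, hσ, hent, hent]
    congr 1
    ring
  have hBσ : B.submatrix σ σ = B := by
    have h1 : B.submatrix σ σ * A = 1 := by
      calc B.submatrix σ σ * A = B.submatrix σ σ * A.submatrix σ σ := by rw [hAσ]
        _ = (B * A).submatrix σ σ := Matrix.submatrix_mul_equiv B A _ σ _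
        _ = 1 := by rw [hBA, Matrix.submatrix_one_equiv]
    symm
    calc B = 1 * B := (one_mul B).symm
      _ = (B.submatrix σ σ * A) * B := by rw [h1]
      _ = B.submatrix σ σ * (A * B) := by rw [mul_assoc]
      _ = B.submatrix σ σ := by rw [hAB, mul_one]
  have key : ∀ i j : Fin n, d₁ (i + 1) * d₂ (j + 1) = d₁ i * d₂ j := by
    intro i j
    have h := congrFun (congrFun hBσ i) j
    rw [Matrix.submatrix_apply, hσ, hσ, hBent, hBent] at h
    rw [hent, hent] at h
    have e : j + 1 - (i + 1) = j - i := by ring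
    rw [e] at h
    have h' : c (j - i) * (d₁ (i + 1) * d₂ (j + 1)) = c (j - i) * (d₁ i * d₂ j) := by
      linear_combination h
    exact mul_left_cancel₀ (hc _) h'
  set r : F := d₂ 1 * (d₂ 0)⁻¹ with hrdef
  have hr0 : r ≠ 0 := mul_ne_zero (hd₂ 1) (inv_ne_zero (hd₂ 0))
  have hstep₂ : ∀ j : Fin n, d₂ (j + 1) = r * d₂ j := by
    intro j
    have h1 := key 0 j
    have h2 := key 0 0
    rw [zero_add] at h1 h2
    apply mul_left_cancel₀ (hd₁ 1)
    rw [h1, hrdef]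
    calc d₁ 0 * d₂ j = d₁ 0 * d₂ 0 * (d₂ 0)⁻¹ * d₂ j := by
          rw [mul_inv_cancel_right₀ (hd₂ 0)]
      _ = d₁ 1 * d₂ 1 * (d₂ 0)⁻¹ * d₂ j := by rw [h2]
      _ = d₁ 1 * (d₂ 1 * (d₂ 0)⁻¹ * d₂ j) := by ring
  have hstep₁ : ∀ i : Fin n, d₁ (i + 1) = r⁻¹ * d₁ i := by
    intro i
    have h1 := key i i
    rw [hstep₂ i] at h1
    have h2 : d₁ (i + 1) * r = d₁ i := by
      apply mul_right_cancel₀ (hd₂ i)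
      linear_combination h1
    calc d₁ (i + 1) = r⁻¹ * (d₁ (i + 1) * r) := by
          rw [mul_comm r⁻¹, mul_assoc, mul_inv_cancel₀ hr0, mul_one]
      _ = r⁻¹ * d₁ i := by rw [h2]
  have hpow₂ : ∀ m : ℕ, d₂ ((m : Fin n)) = r ^ m * d₂ 0 := by
    intro m
    induction m with
    | zero => simp
    | succ k ih =>
      push_cast
      rw [hstep₂, ih]
      ring
  have hpow₁ : ∀ m : ℕ, d₁ ((m : Fin n)) = (r⁻¹) ^ m * d₁ 0 := by
    intro m
    induction m with
    | zero => simp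
    | succ k ih =>
      push_cast
      rw [hstep₁, ih]
      ring
  have hrn : r ^ n = 1 := by
    have h := hpow₂ n
    rw [Fin.natCast_self] at h
    have h1 : (1 : F) * d₂ 0 = r ^ n * d₂ 0 := by rw [← h, one_mul]
    exact (mul_right_cancel₀ (hd₂ 0) h1).symm
  by_cases hr1 : r = 1
  · -- the scalar case: A² is scalar, contradiction with MDS
    exfalso
    have hd₂const : ∀ j : Fin n, d₂ j = d₂ 0 := by
      intro j
      have := hpow₂ j.val
      rwa [Fin.cast_val_eq_self, hr1, one_pow, one_mul] at this
    have hd₁const : ∀ i : Fin n, d₁ i = d₁ 0 := by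
      intro i
      have := hpow₁ i.val
      rwa [Fin.cast_val_eq_self, hr1, inv_one, one_pow, one_mul] at this
    have hval2 : ((2 : Fin n)).val = 2 := by
      have h2 : ((2 : Fin n)).val = 2 % n := rfl
      rw [h2, Nat.mod_eq_of_lt (by omega)]
    have h02 : (0 : Fin n) ≠ 2 := by
      intro h
      have := congrArg Fin.val h
      rw [Fin.val_zero, hval2] at this
      omega
    have hsum : ∑ k : Fin n, c k * c (2 - k) = 0 := by
      have h := congrFun (congrFun hAB 0) 2
      rw [Matrix.mul_apply, Matrix.one_apply_ne h02] at h
      have h' : ∑ k : Fin n, A 0 k * B k 2 =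
          (d₁ 0 * d₂ 0) * ∑ k : Fin n, c k * c (2 - k) := by
        rw [Finset.mul_sum]
        apply Finset.sum_congr rfl
        intro k _
        rw [hBent, hd₁const, hd₂const, hent, hent, sub_zero]
        ring
      rw [h'] at h
      rcases mul_eq_zero.mp h with h | h
      · exact absurd (mul_eq_zero.mp h) (by push_neg; exact ⟨hd₁ 0, hd₂ 0⟩)
      · exact h
    -- pairing argument in characteristic two
    set f : Fin n → F := fun k => c k * c (2 - k) with hfdef
    have hsplit := Finset.sum_filter_add_sum_filter_not Finset.univ
      (fun k : Fin n => (2 : Fin n) - k = k) f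
    have hzero : ∑ k ∈ Finset.filter (fun k => ¬ ((2 : Fin n) - k = k)) Finset.univ, f k = 0 := by
      apply Finset.sum_involution (fun k _ => (2 : Fin n) - k)
      · intro a _
        show c a * c (2 - a) + c (2 - a) * c (2 - (2 - a)) = 0
        rw [sub_sub_cancel, mul_comm]
        exact CharTwo.add_self_eq_zero _
      · intro a ha _
        have := (Finset.mem_filter.mp ha).2
        exact fun h => this h
      · intro a ha
        have := (Finset.mem_filter.mp ha).2
        simp only [Finset.mem_filter, Finset.mem_univ, true_and, sub_sub_cancel]
        exact fun h => this h.symm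
      · intro a _
        exact sub_sub_cancel _ _
    have hfixsum : ∑ k ∈ Finset.filter (fun k => (2 : Fin n) - k = k) Finset.univ, f k = 0 := by
      rw [hzero, add_zero, hsum] at hsplit
      exact hsplit
    have hfixiff : ∀ k : Fin n, ((2 : Fin n) - k = k) ↔ (k - 1) + (k - 1) = 0 := by
      intro k
      constructor <;> (intro h; linear_combination -h)
    have h21 : (2 : Fin n) - 1 = 1 := by ring
    rcases Nat.even_or_odd n with hev | hodd
    · -- n even : n = 2 m with 2 ≤ m
      obtain ⟨m, hm⟩ := hev
      have hm2 : 2 ≤ m := by omega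
      set μ : Fin n := ⟨m, by omega⟩ with hμdef
      have hμval : μ.val = m := rfl
      have hμμ : μ + μ = 0 := by
        rw [fin_add_self_eq_zero]
        right
        rw [hμval]; omega
      have hμ0 : μ ≠ 0 := by
        intro h
        have := congrArg Fin.val h
        rw [hμval, Fin.val_zero] at this
        omega
      have hne : (1 : Fin n) ≠ 1 + μ := by
        intro h
        exact hμ0 (left_eq_add.mp h)
      have h2μ : (2 : Fin n) - (1 + μ) = 1 + μ := by linear_combination -hμμ
      have hset : Finset.filter (fun k => (2 : Fin n) - k = k) Finset.univ
          = ({1, 1 + μ} : Finset (Fin n)) := by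
        ext k
        simp only [Finset.mem_filter, Finset.mem_univ, true_and, Finset.mem_insert,
          Finset.mem_singleton]
        rw [hfixiff, fin_add_self_eq_zero]
        constructor
        · rintro (h | h)
          · left; exact sub_eq_zero.mp h
          · right
            have hv : (k - 1).val = m := by omega
            have hkμ : k - 1 = μ := Fin.ext (by rw [hv, hμval])
            calc k = (k - 1) + 1 := by ring
              _ = μ + 1 := by rw [hkμ]
              _ = 1 + μ := add_comm _ _
        · rintro (h | h)
          · left; rw [h, sub_self]
          · right
            have hkμ : k - 1 = μ := by rw [h]; ring
            rw [hkμ, hμval]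
            omega
      rw [hset, Finset.sum_pair hne] at hfixsum
      have hs : c 1 * c 1 + c (1 + μ) * c (1 + μ) = 0 := by
        have h1 : f 1 = c 1 * c 1 := by
          show c 1 * c ((2 : Fin n) - 1) = c 1 * c 1
          rw [h21]
        have h2 : f (1 + μ) = c (1 + μ) * c (1 + μ) := by
          show c (1 + μ) * c ((2 : Fin n) - (1 + μ)) = c (1 + μ) * c (1 + μ)
          rw [h2μ]
        rw [h1, h2] at hfixsum
        exact hfixsum
      have hceq : c 1 = c (1 + μ) := by
        have hsq : (c 1 + c (1 + μ)) ^ 2 = 0 := by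
          rw [CharTwo.add_sq]
          linear_combination hs
        have h0 : c 1 + c (1 + μ) = 0 := by
          exact pow_eq_zero_iff (by norm_num) |>.mp hsq
        have := eq_neg_of_add_eq_zero_left h0
        rwa [CharTwo.neg_eq] at this
      have h0μ : (0 : Fin n) ≠ μ := fun h => hμ0 h.symm
      apply hmds 2 ![0, μ] ![1, 1 + μ] (inj2 h0μ) (inj2 hne)
      rw [Matrix.det_fin_two]
      simp only [Matrix.submatrix_apply, Matrix.cons_val_zero, Matrix.cons_val_one,
        Matrix.head_cons]
      rw [hent, hent, hent, hent, sub_zero, sub_zero, add_sub_cancel_right]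
      have h1μ : (1 : Fin n) - μ = 1 + μ := by linear_combination -hμμ
      rw [h1μ, ← hceq]
      ring
    · -- n odd : only fixed point is 1
      have hset : Finset.filter (fun k => (2 : Fin n) - k = k) Finset.univ
          = ({1} : Finset (Fin n)) := by
        ext k
        simp only [Finset.mem_filter, Finset.mem_univ, true_and, Finset.mem_singleton]
        rw [hfixiff, fin_add_self_eq_zero]
        constructor
        · rintro (h | h)
          · exact sub_eq_zero.mp h
          · exfalso
            rcases hodd with ⟨t, ht⟩
            omega
        · intro h
          left; rw [h, sub_self]
      rw [hset, Finset.sum_singleton] at hfixsum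
      have h1 : f 1 = c 1 * c 1 := by
        show c 1 * c ((2 : Fin n) - 1) = c 1 * c 1
        rw [h21]
      rw [h1] at hfixsum
      exact hc 1 (mul_self_eq_zero.mp hfixsum)
  · -- geometric case: both traces vanish
    have hgeom : ∀ x : F, x ≠ 1 → x ^ n = 1 → ∑ m ∈ Finset.range n, x ^ m = 0 := by
      intro x hx1 hxn
      rw [geom_sum_eq hx1, hxn, sub_self, zero_div]
    constructor
    · have ht : D₁.trace = ∑ i : Fin n, d₁ i := rfl
      rw [ht]
      have h : ∑ i : Fin n, d₁ i = ∑ i : Fin n, (r⁻¹) ^ (i : ℕ) * d₁ 0 := by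
        apply Finset.sum_congr rfl
        intro i _
        rw [← hpow₁ i.val, Fin.cast_val_eq_self]
      rw [h, ← Finset.sum_mul, Fin.sum_univ_eq_sum_range (fun m => (r⁻¹) ^ m) n,
        hgeom r⁻¹ (by simpa using hr1) (by rw [inv_pow, hrn, inv_one]), zero_mul]
    · have ht : D₂.trace = ∑ i : Fin n, d₂ i := rfl
      rw [ht]
      have h : ∑ i : Fin n, d₂ i = ∑ i : Fin n, r ^ (i : ℕ) * d₂ 0 := by
        apply Finset.sum_congr rfl
        intro i _
        rw [← hpow₂ i.val, Fin.cast_val_eq_self]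
      rw [h, ← Finset.sum_mul, Fin.sum_univ_eq_sum_range (fun m => r ^ m) n,
        hgeom r hr1 hrn, zero_mul]
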